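/- Let x be an N-position of Moore's NIM game NIM(n,k) and let K ⊆ {1,…,n} be a set of pile indices with |K| = k. If y and y' are both P-positions reachable from x by a single move that decreases only piles with indices in K, then S(y) = S(y'); i.e., all P-positions reachable from x by moves supported on K leave the same total number of stones. -/

import Mathlib

lemma tb_div (m J t : ℕ) : (m / 2^J).testBit t = m.testBit (J + t) := by
  rw [Nat.testBit_eq_decide_div_mod_eq, Nat.testBit_eq_decide_div_mod_eq, Nat.div_div_eq_div_mul, ← pow_add]

lemma tb_eq_of_div_eq {a b J : ℕ} (h : a / 2^J = b / 2^J) :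
    ∀ j, J ≤ j → a.testBit j = b.testBit j := by
  intro j hj
  obtain ⟨t, rfl⟩ := Nat.exists_eq_add_of_le hj
  rw [← tb_div, ← tb_div, h]

lemma div_pow_succ (a J : ℕ) : a / 2^(J+1) = (a / 2^J) / 2 := by
  rw [Nat.div_div_eq_div_mul, pow_succ]

lemma lt_of_high {a b J : ℕ} (h : a / 2^(J+1) = b / 2^(J+1))
    (ha : a.testBit J = false) (hb : b.testBit J = true) : a < b :=
  Nat.lt_of_testBit J ha hb (fun j hj => tb_eq_of_div_eq h j hj)

lemma binexp : ∀ N m : ℕ, m < 2^N → m = ∑ j ∈ Finset.range N, 2^j * (m.testBit j).toNat := by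
  intro N
  induction N with
  | zero => intro m hm; interval_cases m; simp
  | succ N ih =>
    intro m hm
    have h2 : m / 2 < 2^N := by
      rw [pow_succ] at hm; omega
    rw [Finset.sum_range_succ']
    have e1 : ∑ j ∈ Finset.range N, 2^(j+1) * (m.testBit (j+1)).toNat
        = 2 * (m / 2) := by
      rw [show (2:ℕ) * (m/2) = 2 * ∑ j ∈ Finset.range N, 2^j * ((m/2).testBit j).toNat by
        rw [← ih (m/2) h2], Finset.mul_sum]
      refine Finset.sum_congr rfl fun j _ => ?_
      rw [show m.testBit (j+1) = (m/2).testBit j from (Nat.testBit_div_two m j).symm]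
      ring
    rw [e1]
    have e2 : (m.testBit 0).toNat = m % 2 := by
      rcases Nat.mod_two_eq_zero_or_one m with h | h <;> simp [Nat.testBit_zero, h]
    rw [e2]
    simp
    omega

lemma core (n k : ℕ) : ∀ J : ℕ, ∀ z : Fin n → ℕ, ∀ S : Finset (Fin n), S.card ≤ k →
    ∃ (w : Fin n → ℕ) (S' : Finset (Fin n)), S ⊆ S' ∧ S'.card ≤ k ∧
      (∀ i ∉ S', w i = z i) ∧ (∀ i ∈ S', w i / 2^J = z i / 2^J) ∧
      (∀ i ∈ S', i ∉ S → w i < z i) ∧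
      (∀ j < J, (k+1) ∣ ∑ i, ((w i).testBit j).toNat) := by
  intro J
  induction J with
  | zero =>
    intro z S hS
    exact ⟨z, S, Finset.Subset.refl S, hS, fun _ _ => rfl, fun _ _ => rfl,
      fun i hi hni => absurd hi hni, fun j hj => absurd hj (Nat.not_lt_zero j)⟩
  | succ J ih =>
    intro z S hS
    classical
    set F : Finset (Fin n) := Finset.univ.filter (fun i => i ∉ S ∧ (z i).testBit J) with hF
    set s : ℕ := F.card with hs
    obtain ⟨T, R₂, hTS, hRF, hcard, hRs, hdvd⟩ :
        ∃ (T R₂ : Finset (Fin n)), T ⊆ S ∧ R₂ ⊆ F ∧ (S ∪ R₂).card ≤ k ∧ R₂.card ≤ s ∧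
          (k+1) ∣ (T.card + (s - R₂.card)) := by
      set q := s % (k+1) with hq
      obtain ⟨a, ha⟩ : ∃ a, s = (k+1) * a + q := ⟨s / (k+1), by rw [hq]; exact (Nat.div_add_mod s (k+1)).symm⟩
      by_cases hd : (k+1 - q) % (k+1) ≤ S.card
      · have hqlt : q < k+1 := Nat.mod_lt _ (by omega)
        rcases Nat.eq_zero_or_pos q with h0 | h0
        · refine ⟨∅, ∅, Finset.empty_subset _, Finset.empty_subset _, by simpa using hS,
            Nat.zero_le _, ?_⟩
          simp only [Finset.card_empty, Nat.sub_zero, Nat.zero_add]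
          exact ⟨a, by omega⟩
        · have hmod : (k+1-q) % (k+1) = k+1-q := Nat.mod_eq_of_lt (by omega)
          rw [hmod] at hd
          obtain ⟨T, hT, hTcard⟩ := Finset.exists_subset_card_eq hd
          refine ⟨T, ∅, hT, Finset.empty_subset _, by simpa using hS, Nat.zero_le _, ?_⟩
          rw [Finset.card_empty, Nat.sub_zero, hTcard]
          refine ⟨a+1, ?_⟩
          have h2 : (k+1)*(a+1) = (k+1)*a + (k+1) := by ring
          omega
      · have hqlt : q < k+1 := Nat.mod_lt _ (by omega)
        have hq1 : 0 < q := by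
          by_contra h0
          have : q = 0 := by omega
          simp [this] at hd
        have hmod : (k+1-q) % (k+1) = k+1-q := Nat.mod_eq_of_lt (by omega)
        rw [hmod] at hd
        have hqs : q ≤ s := Nat.mod_le _ _
        obtain ⟨R₂, hR, hRcard⟩ := Finset.exists_subset_card_eq (s := F) (n := q) hqs
        refine ⟨∅, R₂, Finset.empty_subset _, hR, ?_, by omega, ?_⟩
        · have hdisj : Disjoint S R₂ := by
            rw [Finset.disjoint_left]
            intro i hiS hiR
            have := hR hiR
            rw [hF, Finset.mem_filter] at this
            exact this.2.1 hiS
          rw [Finset.card_union_of_disjoint hdisj, hRcard]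
          omega
        · rw [Finset.card_empty, hRcard, Nat.zero_add]
          exact ⟨a, by omega⟩
    set S₂ : Finset (Fin n) := S ∪ R₂ with hS₂
    set z₁ : Fin n → ℕ := fun i =>
      if i ∈ S₂ then (z i / 2^(J+1)) * 2^(J+1) + (if i ∈ T then 2^J else 0) else z i with hz₁
    have hpow : (2:ℕ)^J < 2^(J+1) := by
      rw [pow_succ]
      have := Nat.two_pow_pos J
      omega
    have f1 : ∀ i, z₁ i / 2^(J+1) = z i / 2^(J+1) := by
      intro i
      simp only [hz₁]
      by_cases h : i ∈ S₂
      · simp only [h, if_true]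
        rw [mul_comm, Nat.mul_add_div (by positivity)]
        have : (if i ∈ T then 2^J else 0) / 2^(J+1) = 0 :=
          Nat.div_eq_of_lt (by split <;> omega)
        omega
      · simp [h]
    have f2 : ∀ i ∈ S₂, (z₁ i).testBit J = decide (i ∈ T) := by
      intro i hi
      simp only [hz₁, hi, if_true]
      rw [Nat.testBit_eq_decide_div_mod_eq]
      have e1 : ((z i / 2^(J+1)) * 2^(J+1) + (if i ∈ T then 2^J else 0)) / 2^J
          = (z i / 2^(J+1)) * 2 + (if i ∈ T then 1 else 0) := by
        have e0 : (z i / 2^(J+1)) * 2^(J+1) = 2^J * ((z i / 2^(J+1)) * 2) := by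
          rw [pow_succ]; ring
        rw [e0, Nat.mul_add_div (by positivity)]
        congr 1
        split
        · exact Nat.div_self (by positivity)
        · exact Nat.zero_div _
      rw [e1]
      by_cases hT : i ∈ T <;> simp [hT, Nat.mul_add_mod, Nat.mul_mod_left] <;> omega
    have f3 : ∑ i, ((z₁ i).testBit J).toNat = T.card + (s - R₂.card) := by
      rw [← Finset.sum_add_sum_compl S₂]
      congr 1
      · have : ∀ i ∈ S₂, ((z₁ i).testBit J).toNat = if i ∈ T then 1 else 0 := by
          intro i hi
          rw [f2 i hi]
          by_cases hT : i ∈ T <;> simp [hT]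
        rw [Finset.sum_congr rfl this, Finset.sum_ite_mem,
          Finset.inter_eq_right.mpr (hTS.trans Finset.subset_union_left)]
        simp
      · have hz₁eq : ∀ i ∈ S₂ᶜ, ((z₁ i).testBit J).toNat
            = if (z i).testBit J then 1 else 0 := by
          intro i hi
          rw [Finset.mem_compl] at hi
          simp only [hz₁, hi, if_false]
          cases h : (z i).testBit J <;> simp [h]
        rw [Finset.sum_congr rfl hz₁eq, Finset.sum_boole]
        have hset : S₂ᶜ.filter (fun i => (z i).testBit J) = F \ R₂ := by
          ext i
          simp only [Finset.mem_filter, Finset.mem_compl, Finset.mem_sdiff, hS₂,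
            Finset.mem_union, hF, Finset.mem_univ, true_and, not_or]
          tauto
        rw [hset, Finset.card_sdiff_of_subset hRF]
        simp [hs]
    obtain ⟨w, S', hSS', hS'card, hout, hdiv, hlt, hdvd'⟩ := ih z₁ S₂ hcard
    have hS₂S' : S₂ ⊆ S' := hSS'
    refine ⟨w, S', (Finset.subset_union_left).trans hS₂S', hS'card, ?_, ?_, ?_, ?_⟩
    · intro i hi
      rw [hout i hi]
      simp only [hz₁]
      rw [if_neg (fun h => hi (hS₂S' h))]
    · intro i hi
      have h4 : w i / 2^(J+1) = z₁ i / 2^(J+1) := by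
        rw [div_pow_succ, div_pow_succ (z₁ i), hdiv i hi]
      rw [h4, f1]
    · intro i hi hiS
      by_cases h2 : i ∈ S₂
      · have hiR : i ∈ R₂ := by
          rcases Finset.mem_union.mp h2 with h | h
          · exact absurd h hiS
          · exact h
        have hbitz : (z i).testBit J = true := by
          have := hRF hiR
          rw [hF, Finset.mem_filter] at this
          exact this.2.2
        have hbitw : (w i).testBit J = false := by
          have := tb_eq_of_div_eq (hdiv i hi) J (le_refl J)
          rw [this, f2 i h2]
          simp only [decide_eq_false_iff_not]
          exact fun hT => hiS (hTS hT)
        refine lt_of_high ?_ hbitw hbitz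
        have h4 : w i / 2^(J+1) = z₁ i / 2^(J+1) := by
          rw [div_pow_succ, div_pow_succ (z₁ i), hdiv i hi]
        rw [h4, f1]
      · rw [← show z₁ i = z i by simp only [hz₁]; rw [if_neg h2]]
        exact hlt i hi h2
    · intro j hj
      rcases Nat.lt_succ_iff_lt_or_eq.mp hj with h | rfl
      · exact hdvd' j h
      · have : ∀ i : Fin n, (w i).testBit j = (z₁ i).testBit j := by
          intro i
          by_cases hi : i ∈ S'
          · exact tb_eq_of_div_eq (hdiv i hi) j (le_refl j)
          · rw [hout i hi]
        calc (k+1) ∣ T.card + (s - R₂.card) := hdvd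
        _ = ∑ i, ((z₁ i).testBit j).toNat := f3.symm
        _ = ∑ i, ((w i).testBit j).toNat := by
            refine Finset.sum_congr rfl fun i _ => ?_
            rw [this i]

/-- Smith's remoteness function for an impartial game with move relation `mv`. -/
def IsRemoteness {α : Type*} (mv : α → α → Prop) (R : α → ℕ) : Prop :=
  ∀ x : α,
    ((∀ y, ¬ mv x y) → R x = 0) ∧
    ((∃ y, mv x y ∧ Even (R y)) →
      ∃ y, mv x y ∧ Even (R y) ∧ R x = R y + 1 ∧ ∀ z, mv x z → Even (R z) → R y ≤ R z) ∧
    ((∃ y, mv x y) → (∀ y, mv x y → ¬ Even (R y)) →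
      ∃ y, mv x y ∧ R x = R y + 1 ∧ ∀ z, mv x z → R z ≤ R y)

/-- A move of Moore's NIM game NIM(n,k): strictly decrease the piles in some
nonempty set of at most `k` indices, leaving all other piles unchanged. -/
def MooreMove {ι : Type*} [Fintype ι] (k : ℕ) (x y : ι → ℕ) : Prop :=
  (∀ i, y i ≤ x i) ∧ y ≠ x ∧ (Finset.univ.filter fun i => y i < x i).card ≤ k

lemma evenIff {α : Type*} (mv : α → α → Prop) (R : α → ℕ) (hR : IsRemoteness mv R) (x : α) :
    Even (R x) ↔ ∀ y, mv x y → ¬ Even (R y) := by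
  constructor
  · intro hE y hmv hEy
    obtain ⟨y', _, hEy', hRx, _⟩ := (hR x).2.1 ⟨y, hmv, hEy⟩
    rw [hRx] at hE
    exact (Nat.even_add_one.mp hE) hEy'
  · intro hall
    by_cases hmv : ∃ y, mv x y
    · obtain ⟨y, hy, hRx, _⟩ := (hR x).2.2 hmv hall
      rw [hRx, Nat.even_add_one]
      exact hall y hy
    · push_neg at hmv
      rw [(hR x).1 hmv]
      exact Even.zero

/-- if w < z then there is a highest differing bit, where z has 1 and w has 0 -/
lemma high_diff_bit {w z : ℕ} (h : w < z) :
    ∃ j, w.testBit j = false ∧ z.testBit j = true ∧ ∀ j', j < j' → w.testBit j' = z.testBit j' := by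
  have hne : z ^^^ w ≠ 0 := by
    intro h0
    exact absurd (xor_eq_zero_iff.mp h0) (by omega)
  obtain ⟨j, hj, hj'⟩ := Nat.exists_most_significant_bit hne
  rw [Nat.testBit_xor] at hj
  have habove : ∀ j', j < j' → w.testBit j' = z.testBit j' := by
    intro j' hjj'
    have h0 := hj' j' hjj'
    rw [Nat.testBit_xor] at h0
    rcases hzb : z.testBit j' <;> rcases hwb : w.testBit j' <;> simp_all
  rcases hz : z.testBit j with _ | _ <;> rcases hw : w.testBit j with _ | _
  · rw [hz, hw] at hj; simp at hj
  · -- z bit false, w bit true : z < w, contradiction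
    exact absurd (Nat.lt_of_testBit j hz hw (fun j' hjj' => (habove j' hjj').symm)) (by omega)
  · exact ⟨j, hw, hz, habove⟩
  · rw [hz, hw] at hj; simp at hj

/-- From a position with all digit sums divisible by k+1, every move destroys the property. -/
lemma M_destroy (n k : ℕ) (z w : Fin n → ℕ)
    (hM : ∀ j, (k+1) ∣ ∑ i, ((z i).testBit j).toNat)
    (hmv : MooreMove k z w) :
    ¬ ∀ j, (k+1) ∣ ∑ i, ((w i).testBit j).toNat := by
  classical
  obtain ⟨hle, hne, hcard⟩ := hmv
  set T : Finset (Fin n) := Finset.univ.filter (fun i => w i < z i) with hT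
  have hTne : T.Nonempty := by
    by_contra h
    rw [Finset.not_nonempty_iff_eq_empty] at h
    apply hne
    funext i
    by_contra hiw
    have : i ∈ T := by
      rw [hT, Finset.mem_filter]
      exact ⟨Finset.mem_univ i, lt_of_le_of_ne (hle i) hiw⟩
    rw [h] at this
    exact absurd this (Finset.notMem_empty i)
  have spec : ∀ i ∈ T, w i < z i := by
    intro i hi
    rw [hT, Finset.mem_filter] at hi
    exact hi.2
  set g : Fin n → ℕ := fun i =>
    if h : w i < z i then Classical.choose (high_diff_bit h) else 0 with hg
  set j := T.sup g with hj
  have gspec : ∀ i (h : w i < z i), (w i).testBit (g i) = false ∧ (z i).testBit (g i) = true ∧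
      ∀ j', g i < j' → (w i).testBit j' = (z i).testBit j' := by
    intro i h
    rw [hg]
    simp only [dif_pos h]
    exact Classical.choose_spec (high_diff_bit h)
  -- at column j, every differing pile has z-bit 1, w-bit 0
  have hdiffbit : ∀ i, (w i).testBit j ≠ (z i).testBit j →
      (w i).testBit j = false ∧ (z i).testBit j = true := by
    intro i hd
    have hwz : w i < z i := by
      rcases lt_of_le_of_ne (hle i) (fun h => hd (by rw [h])) with h
      exact h
    have hiT : i ∈ T := by
      rw [hT, Finset.mem_filter]; exact ⟨Finset.mem_univ i, hwz⟩
    have hgle : g i ≤ j := Finset.le_sup hiT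
    rcases lt_or_eq_of_le hgle with hlt | heq
    · exact absurd ((gspec i hwz).2.2 j hlt) hd
    · rw [← heq]
      exact ⟨(gspec i hwz).1, (gspec i hwz).2.1⟩
  have hexists : ∃ i, (w i).testBit j ≠ (z i).testBit j := by
    obtain ⟨i, hiT, hsup⟩ := Finset.exists_mem_eq_sup T hTne g
    have hwz := spec i hiT
    refine ⟨i, ?_⟩
    rw [hj, hsup, (gspec i hwz).1, (gspec i hwz).2.1]
    simp
  -- digit sum identity
  set D : Finset (Fin n) := Finset.univ.filter (fun i => (w i).testBit j ≠ (z i).testBit j) with hD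
  have hsum : ∑ i, ((z i).testBit j).toNat = ∑ i, ((w i).testBit j).toNat + D.card := by
    have : ∀ i : Fin n, ((z i).testBit j).toNat
        = ((w i).testBit j).toNat + (if (w i).testBit j ≠ (z i).testBit j then 1 else 0) := by
      intro i
      by_cases hd : (w i).testBit j ≠ (z i).testBit j
      · obtain ⟨h1, h2⟩ := hdiffbit i hd
        simp [h1, h2]
      · push_neg at hd
        rw [hd]
        simp
    rw [Finset.sum_congr rfl (fun i _ => this i), Finset.sum_add_distrib]
    congr 1
    rw [Finset.sum_boole]
    simp [hD]
  have hDpos : 0 < D.card := by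
    obtain ⟨i, hi⟩ := hexists
    have : i ∈ D := by rw [hD, Finset.mem_filter]; exact ⟨Finset.mem_univ i, hi⟩
    exact Finset.card_pos.mpr ⟨i, this⟩
  have hDle : D.card ≤ k := by
    refine le_trans (Finset.card_le_card ?_) hcard
    intro i hi
    rw [hD, Finset.mem_filter] at hi
    rw [Finset.mem_filter]
    refine ⟨Finset.mem_univ i, ?_⟩
    rcases lt_of_le_of_ne (hle i) (fun h => hi.2 (by rw [h])) with h
    exact h
  intro hMw
  have h1 := hM j
  have h2 := hMw j
  rw [hsum] at h1
  have : (k+1) ∣ D.card := (Nat.dvd_add_right h2).mp h1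
  have := Nat.le_of_dvd hDpos this
  omega

/-- From a position with some digit sum not divisible by k+1, there is a Moore move to a
position with all digit sums divisible. -/
lemma M_reach (n k : ℕ) (z : Fin n → ℕ)
    (hbad : ¬ ∀ j, (k+1) ∣ ∑ i, ((z i).testBit j).toNat) :
    ∃ w, MooreMove k z w ∧ ∀ j, (k+1) ∣ ∑ i, ((w i).testBit j).toNat := by
  classical
  push_neg at hbad
  set N : ℕ := (∑ i, z i) + 1 with hN
  have hbound : ∀ j, N ≤ j → ∑ i, ((z i).testBit j).toNat = 0 := by
    intro j hjN
    refine Finset.sum_eq_zero fun i _ => ?_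
    have hzi : z i < 2^j := by
      have h1 : z i ≤ ∑ i', z i' := Finset.single_le_sum (fun i' _ => Nat.zero_le _) (Finset.mem_univ i)
      have h2 : j < 2^j := Nat.lt_two_pow_self
      omega
    rw [Nat.testBit_lt_two_pow hzi]
    rfl
  set Bf : Finset ℕ := (Finset.range N).filter
    (fun j => ¬ (k+1) ∣ ∑ i, ((z i).testBit j).toNat) with hBf
  have hBfne : Bf.Nonempty := by
    obtain ⟨j, hj⟩ := hbad
    refine ⟨j, ?_⟩
    rw [hBf, Finset.mem_filter, Finset.mem_range]
    refine ⟨?_, hj⟩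
    by_contra h
    push_neg at h
    rw [hbound j h] at hj
    exact hj (dvd_zero _)
  set j₀ : ℕ := Bf.max' hBfne with hj₀
  have hj₀mem : j₀ ∈ Bf := Bf.max'_mem hBfne
  have hj₀bad : ¬ (k+1) ∣ ∑ i, ((z i).testBit j₀).toNat := by
    rw [hBf, Finset.mem_filter] at hj₀mem
    exact hj₀mem.2
  have hj₀max : ∀ j, j₀ < j → (k+1) ∣ ∑ i, ((z i).testBit j).toNat := by
    intro j hjj
    by_contra h
    by_cases hjN : j < N
    · have : j ∈ Bf := by rw [hBf, Finset.mem_filter, Finset.mem_range]; exact ⟨hjN, h⟩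
      have := Bf.le_max' j this
      omega
    · push_neg at hjN
      rw [hbound j hjN] at h
      exact h (dvd_zero _)
  -- select q piles with bit j₀ equal to 1
  set F : Finset (Fin n) := Finset.univ.filter (fun i => (z i).testBit j₀) with hF
  have hFcard : F.card = ∑ i, ((z i).testBit j₀).toNat := by
    rw [hF]
    rw [show (∑ i, ((z i).testBit j₀).toNat) = ∑ i, (if (z i).testBit j₀ then 1 else 0) by
      refine Finset.sum_congr rfl fun i _ => ?_; cases h : (z i).testBit j₀ <;> simp [h]]
    rw [Finset.sum_boole]
    simp
  set s : ℕ := ∑ i, ((z i).testBit j₀).toNat with hs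
  set q : ℕ := s % (k+1) with hq
  have hk0 : 0 < k + 1 := Nat.succ_pos k
  have hq1 : 0 < q := by
    rcases Nat.eq_zero_or_pos q with h | h
    · exact absurd (Nat.dvd_of_mod_eq_zero (by omega)) hj₀bad
    · exact h
  have hqk : q < k + 1 := Nat.mod_lt _ hk0
  have hqs : q ≤ s := Nat.mod_le _ _
  obtain ⟨Rs, hRsF, hRscard⟩ := Finset.exists_subset_card_eq (s := F) (n := q) (by rw [hFcard]; exact hqs)
  set z₁ : Fin n → ℕ := fun i => if i ∈ Rs then (z i / 2^(j₀+1)) * 2^(j₀+1) else z i with hz₁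
  have hppos : (0:ℕ) < 2^(j₀+1) := by positivity
  have f1 : ∀ i, z₁ i / 2^(j₀+1) = z i / 2^(j₀+1) := by
    intro i
    simp only [hz₁]
    by_cases h : i ∈ Rs
    · rw [if_pos h, Nat.mul_div_cancel _ hppos]
    · rw [if_neg h]
  have f2 : ∀ i ∈ Rs, (z₁ i).testBit j₀ = false := by
    intro i hi
    simp only [hz₁, if_pos hi]
    rw [Nat.testBit_eq_decide_div_mod_eq]
    have e0 : (z i / 2^(j₀+1)) * 2^(j₀+1) = 2^j₀ * ((z i / 2^(j₀+1)) * 2) := by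
      rw [pow_succ]; ring
    rw [e0, Nat.mul_div_cancel_left _ (by positivity : (0:ℕ) < 2^j₀)]
    simp [Nat.mul_mod_left]
  have hbitz : ∀ i ∈ Rs, (z i).testBit j₀ = true := by
    intro i hi
    have := hRsF hi
    rw [hF, Finset.mem_filter] at this
    exact this.2
  have hsumz₁ : ∑ i, ((z₁ i).testBit j₀).toNat = s - q := by
    have hsplit : ∑ i, ((z₁ i).testBit j₀).toNat
        = ∑ i ∈ Rs, ((z₁ i).testBit j₀).toNat + ∑ i ∈ Rsᶜ, ((z₁ i).testBit j₀).toNat :=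
      (Finset.sum_add_sum_compl Rs _).symm
    have h1 : ∑ i ∈ Rs, ((z₁ i).testBit j₀).toNat = 0 :=
      Finset.sum_eq_zero fun i hi => by rw [f2 i hi]; rfl
    have h2 : ∑ i ∈ Rsᶜ, ((z₁ i).testBit j₀).toNat = ∑ i ∈ Rsᶜ, ((z i).testBit j₀).toNat := by
      refine Finset.sum_congr rfl fun i hi => ?_
      rw [Finset.mem_compl] at hi
      simp only [hz₁, if_neg hi]
    have h3 : ∑ i ∈ Rs, ((z i).testBit j₀).toNat = q := by
      rw [Finset.sum_congr rfl (fun i hi => by rw [hbitz i hi] : ∀ i ∈ Rs, ((z i).testBit j₀).toNat = (true : Bool).toNat)]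
      simp [hRscard]
    have h4 : ∑ i ∈ Rs, ((z i).testBit j₀).toNat + ∑ i ∈ Rsᶜ, ((z i).testBit j₀).toNat = s :=
      Finset.sum_add_sum_compl Rs _
    omega
  have hdvds₁ : (k+1) ∣ s - q := by
    obtain ⟨a, ha⟩ : ∃ a, s = (k+1) * a + q := ⟨s / (k+1), by rw [hq]; exact (Nat.div_add_mod s (k+1)).symm⟩
    exact ⟨a, by omega⟩
  have hhigh : ∀ j, j₀ ≤ j → (k+1) ∣ ∑ i, ((z₁ i).testBit j).toNat := by
    intro j hj
    rcases lt_or_eq_of_le hj with hlt | rfl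
    · have : ∀ i, (z₁ i).testBit j = (z i).testBit j := by
        intro i
        exact tb_eq_of_div_eq (f1 i) j hlt
      rw [Finset.sum_congr rfl fun i _ => by rw [this i]]
      exact hj₀max j hlt
    · rw [hsumz₁]
      exact hdvds₁
  obtain ⟨w, S', hSS', hS'card, hout, hdiv, hlt, hdvd'⟩ :=
    core n k j₀ z₁ Rs (by rw [hRscard]; omega)
  have houteq : ∀ i ∉ S', w i = z i := by
    intro i hi
    rw [hout i hi]
    simp only [hz₁, if_neg (fun h => hi (hSS' h))]
  have hbits_high : ∀ i, ∀ j, j₀ ≤ j → (w i).testBit j = (z₁ i).testBit j := by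
    intro i j hj
    by_cases hi : i ∈ S'
    · exact tb_eq_of_div_eq (hdiv i hi) j hj
    · rw [hout i hi]
  have hstrict : ∀ i ∈ Rs, w i < z i := by
    intro i hi
    have hiS' : i ∈ S' := hSS' hi
    refine lt_of_high ?_ ?_ (hbitz i hi)
    · have h4 : w i / 2^(j₀+1) = z₁ i / 2^(j₀+1) := by
        rw [div_pow_succ, div_pow_succ (z₁ i), hdiv i hiS']
      rw [h4, f1]
    · rw [hbits_high i j₀ (le_refl j₀), f2 i hi]
  have hle : ∀ i, w i ≤ z i := by
    intro i
    by_cases hi : i ∈ S'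
    · by_cases hiR : i ∈ Rs
      · exact le_of_lt (hstrict i hiR)
      · have := hlt i hi hiR
        simp only [hz₁, if_neg hiR] at this
        exact le_of_lt this
    · rw [houteq i hi]
  obtain ⟨i₀, hi₀⟩ : Rs.Nonempty := Finset.card_pos.mp (by rw [hRscard]; omega)
  refine ⟨w, ⟨hle, ?_, ?_⟩, ?_⟩
  · intro h
    have := hstrict i₀ hi₀
    rw [h] at this
    omega
  · refine le_trans (Finset.card_le_card ?_) hS'card
    intro i hi
    rw [Finset.mem_filter] at hi
    by_contra hiS'
    rw [houteq i hiS'] at hi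
    omega
  · intro j
    by_cases hj : j < j₀
    · exact hdvd' j hj
    · push_neg at hj
      rw [Finset.sum_congr rfl fun i _ => by rw [hbits_high i j hj]]
      exact hhigh j hj

lemma even_iff_M (n k : ℕ) (R : (Fin n → ℕ) → ℕ) (hR : IsRemoteness (MooreMove k) R) :
    ∀ z : Fin n → ℕ, Even (R z) ↔ ∀ j, (k+1) ∣ ∑ i, ((z i).testBit j).toNat := by
  have hdec : ∀ z w : Fin n → ℕ, MooreMove k z w → ∑ i, w i < ∑ i, z i := by
    rintro z w ⟨hle, hne, -⟩
    refine Finset.sum_lt_sum (fun i _ => hle i) ?_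
    by_contra h
    push_neg at h
    exact hne (funext fun i => le_antisymm (hle i) (h i (Finset.mem_univ i)))
  suffices h : ∀ N, ∀ z : Fin n → ℕ, ∑ i, z i < N →
      (Even (R z) ↔ ∀ j, (k+1) ∣ ∑ i, ((z i).testBit j).toNat) by
    intro z
    exact h (∑ i, z i + 1) z (by omega)
  intro N
  induction N with
  | zero => intro z hz; exact absurd hz (by omega)
  | succ N ih =>
    intro z hz
    constructor
    · intro hE
      by_contra hbad
      obtain ⟨w, hmv, hMw⟩ := M_reach n k z hbad
      have hEw : Even (R w) := (ih w (by have := hdec z w hmv; omega)).mpr hMw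
      exact (evenIff _ R hR z).mp hE w hmv hEw
    · intro hM
      rw [evenIff _ R hR z]
      intro w hmv hEw
      have hMw := (ih w (by have := hdec z w hmv; omega)).mp hEw
      exact M_destroy n k z w hM hmv hMw

/-- If `x` is an N-position of Moore's NIM game NIM(n,k) and `K` is a set of
`k` pile indices, then any two P-positions reachable from `x` by a single move
decreasing only piles in `K` leave the same total number of stones. -/
theorem moore_same_stones_on_support (n k : ℕ) (hk : 0 < k) (hkn : k ≤ n)
    (R : (Fin n → ℕ) → ℕ) (hR : IsRemoteness (MooreMove k) R)
    (x : Fin n → ℕ) (hx : ¬ Even (R x))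
    (K : Finset (Fin n)) (hK : K.card = k)
    (y y' : Fin n → ℕ)
    (hy : MooreMove k x y) (hyP : Even (R y)) (hyK : ∀ i, y i < x i → i ∈ K)
    (hy' : MooreMove k x y') (hy'P : Even (R y')) (hy'K : ∀ i, y' i < x i → i ∈ K) :
    ∑ i, y i = ∑ i, y' i := by
  classical
  have key := even_iff_M n k R hR
  have hMy := (key y).mp hyP
  have hMy' := (key y').mp hy'P
  have heq : ∀ i ∉ K, y i = x i := by
    intro i hi
    have h1 := hy.1 i
    by_contra h
    exact hi (hyK i (by omega))
  have heq' : ∀ i ∉ K, y' i = x i := by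
    intro i hi
    have h1 := hy'.1 i
    by_contra h
    exact hi (hy'K i (by omega))
  -- digit sums over K coincide
  have hA : ∀ j, (∑ i ∈ K, ((y i).testBit j).toNat) = ∑ i ∈ K, ((y' i).testBit j).toNat := by
    intro j
    set A := ∑ i ∈ K, ((y i).testBit j).toNat with hAdef
    set A' := ∑ i ∈ K, ((y' i).testBit j).toNat with hA'def
    set C := ∑ i ∈ Kᶜ, ((x i).testBit j).toNat with hCdef
    have h1 : (k+1) ∣ A + C := by
      have := hMy j
      rw [← Finset.sum_add_sum_compl K] at this
      rwa [Finset.sum_congr rfl (fun i hi => by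
        rw [heq i (Finset.mem_compl.mp hi)] : ∀ i ∈ Kᶜ, ((y i).testBit j).toNat
          = ((x i).testBit j).toNat)] at this
    have h2 : (k+1) ∣ A' + C := by
      have := hMy' j
      rw [← Finset.sum_add_sum_compl K] at this
      rwa [Finset.sum_congr rfl (fun i hi => by
        rw [heq' i (Finset.mem_compl.mp hi)] : ∀ i ∈ Kᶜ, ((y' i).testBit j).toNat
          = ((x i).testBit j).toNat)] at this
    have hAle : A ≤ k := by
      calc A ≤ ∑ i ∈ K, 1 := Finset.sum_le_sum (fun i _ => Bool.toNat_le _)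
      _ = k := by rw [Finset.sum_const, smul_eq_mul, mul_one, hK]
    have hA'le : A' ≤ k := by
      calc A' ≤ ∑ i ∈ K, 1 := Finset.sum_le_sum (fun i _ => Bool.toNat_le _)
      _ = k := by rw [Finset.sum_const, smul_eq_mul, mul_one, hK]
    have d1 : (k+1) ∣ (A + C) - (A' + C) := Nat.dvd_sub h1 h2
    have d2 : (k+1) ∣ (A' + C) - (A + C) := Nat.dvd_sub h2 h1
    have e1 : A - A' = 0 := by
      rcases Nat.eq_zero_or_pos (A - A') with h | h
      · exact h
      · have : (k+1) ∣ A - A' := by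
          have : (A + C) - (A' + C) = A - A' := by omega
          rwa [this] at d1
        have := Nat.le_of_dvd h this
        omega
    have e2 : A' - A = 0 := by
      rcases Nat.eq_zero_or_pos (A' - A) with h | h
      · exact h
      · have : (k+1) ∣ A' - A := by
          have : (A' + C) - (A + C) = A' - A := by omega
          rwa [this] at d2
        have := Nat.le_of_dvd h this
        omega
    omega
  -- convert digit sums to stone counts
  set N := (∑ i, y i) + (∑ i, y' i) + 1 with hN
  have hyb : ∀ i, y i < 2^N := by
    intro i
    have h1 : y i ≤ ∑ i', y i' := Finset.single_le_sum (fun i' _ => Nat.zero_le _) (Finset.mem_univ i)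
    have h2 : N < 2^N := Nat.lt_two_pow_self
    omega
  have hy'b : ∀ i, y' i < 2^N := by
    intro i
    have h1 : y' i ≤ ∑ i', y' i' := Finset.single_le_sum (fun i' _ => Nat.zero_le _) (Finset.mem_univ i)
    have h2 : N < 2^N := Nat.lt_two_pow_self
    omega
  have hsumK : ∑ i ∈ K, y i = ∑ i ∈ K, y' i := by
    have expand : ∀ v : Fin n → ℕ, (∀ i, v i < 2^N) →
        ∑ i ∈ K, v i = ∑ j ∈ Finset.range N, 2^j * ∑ i ∈ K, ((v i).testBit j).toNat := by
      intro v hv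
      rw [Finset.sum_congr rfl (fun i _ => binexp N (v i) (hv i))]
      rw [Finset.sum_comm]
      exact Finset.sum_congr rfl (fun j _ => (Finset.mul_sum _ _ _).symm)
    rw [expand y hyb, expand y' hy'b]
    exact Finset.sum_congr rfl (fun j _ => by rw [hA j])
  calc ∑ i, y i = ∑ i ∈ K, y i + ∑ i ∈ Kᶜ, y i := (Finset.sum_add_sum_compl K _).symm
  _ = ∑ i ∈ K, y' i + ∑ i ∈ Kᶜ, y' i := by
      rw [hsumK]
      congr 1
      exact Finset.sum_congr rfl (fun i hi => by
        rw [heq i (Finset.mem_compl.mp hi), heq' i (Finset.mem_compl.mp hi)])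
  _ = ∑ i, y' i := Finset.sum_add_sum_compl K _
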